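/- Let A be an n×n symmetric positive semidefinite matrix and P an n×n orthogonal projection matrix. Then 0 ≤ log det(I + A) − log det(I + P A P) ≤ trace(A − P A P). -/

import Mathlib

open Matrix
open scoped MatrixOrder

lemma psd_trace_nonneg' {n : ℕ} {M : Matrix (Fin n) (Fin n) ℝ} (hM : M.PosSemidef) :
    0 ≤ M.trace := by
  rw [Matrix.trace]
  refine Finset.sum_nonneg fun i _ => ?_
  exact hM.diag_nonneg

lemma det_one_add_bounds {n : ℕ} {F : Matrix (Fin n) (Fin n) ℝ} (hF : F.PosSemidef) :
    1 ≤ (1 + F).det ∧ (1 + F).det ≤ Real.exp F.trace := by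
  classical
  set U : Matrix (Fin n) (Fin n) ℝ :=
    (Matrix.IsHermitian.eigenvectorUnitary hF.1 : Matrix (Fin n) (Fin n) ℝ) with hU
  have hUU : U * star U = 1 :=
    (Matrix.mem_unitaryGroup_iff).mp (Matrix.IsHermitian.eigenvectorUnitary hF.1).2
  have hUU' : star U * U = 1 :=
    (Matrix.mem_unitaryGroup_iff').mp (Matrix.IsHermitian.eigenvectorUnitary hF.1).2
  have hspec : F = U * Matrix.diagonal (RCLike.ofReal ∘ hF.1.eigenvalues) * star U :=
    Matrix.IsHermitian.spectral_theorem hF.1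
  have hdiag : (RCLike.ofReal ∘ hF.1.eigenvalues : Fin n → ℝ) = hF.1.eigenvalues := by
    funext i; simp
  rw [hdiag] at hspec
  have h1F : 1 + F = U * (1 + Matrix.diagonal hF.1.eigenvalues) * star U := by
    rw [Matrix.mul_add, Matrix.add_mul, mul_one, hUU, ← hspec]
  have hdet : (1 + F).det = ∏ i, (1 + hF.1.eigenvalues i) := by
    rw [h1F, Matrix.det_mul, Matrix.det_mul, mul_comm (U.det), mul_assoc, ← Matrix.det_mul,
      hUU, Matrix.det_one, mul_one,
      show (1 : Matrix (Fin n) (Fin n) ℝ) + Matrix.diagonal hF.1.eigenvalues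
        = Matrix.diagonal (fun i => 1 + hF.1.eigenvalues i) by
          rw [← Matrix.diagonal_one, Matrix.diagonal_add],
      Matrix.det_diagonal]
  have htr : F.trace = ∑ i, hF.1.eigenvalues i := by
    conv_lhs => rw [hspec]
    rw [Matrix.trace_mul_cycle, hUU', one_mul, Matrix.trace_diagonal]
  have hnn := hF.eigenvalues_nonneg
  constructor
  · rw [hdet]
    calc (1 : ℝ) = ∏ _i : Fin n, (1 : ℝ) := Finset.prod_const_one.symm
      _ ≤ ∏ i, (1 + hF.1.eigenvalues i) :=
        Finset.prod_le_prod (fun i _ => by norm_num) (fun i _ => by linarith [hnn i])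
  · rw [hdet, htr, Real.exp_sum]
    refine Finset.prod_le_prod (fun i _ => by linarith [hnn i]) fun i _ => ?_
    have := Real.add_one_le_exp (hF.1.eigenvalues i)
    linarith

lemma psd_trace_mul_nonneg {n : ℕ} {X Y : Matrix (Fin n) (Fin n) ℝ}
    (hX : X.PosSemidef) (hY : Y.PosSemidef) : 0 ≤ (X * Y).trace := by
  classical
  have hR : CFC.sqrt X * CFC.sqrt X = X := CFC.sqrt_mul_sqrt_self X hX.nonneg
  have hRh : (CFC.sqrt X).conjTranspose = CFC.sqrt X := (CFC.sqrt_nonneg X).posSemidef.1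
  have h1 : (CFC.sqrt X * Y * CFC.sqrt X).trace = (X * Y).trace := by
    conv_rhs => rw [← hR]
    rw [Matrix.trace_mul_cycle]
  rw [← h1]
  refine psd_trace_nonneg' ?_
  have := hY.mul_mul_conjTranspose_same (CFC.sqrt X)
  rwa [hRh] at this

theorem stmt_5 {n : ℕ} (A P : Matrix (Fin n) (Fin n) ℝ)
    (hA : A.PosSemidef) (hPsym : P.transpose = P) (hPproj : P * P = P) :
    0 ≤ Real.log (1 + A).det - Real.log (1 + P * A * P).det ∧
    Real.log (1 + A).det - Real.log (1 + P * A * P).det ≤ (A - P * A * P).trace := by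
  classical
  set B := CFC.sqrt A with hBdef
  have hBB : B * B = A := CFC.sqrt_mul_sqrt_self A hA.nonneg
  have hBh : B.conjTranspose = B := (CFC.sqrt_nonneg A).posSemidef.1
  have hPh : P.conjTranspose = P := hPsym
  have hPpsd : P.PosSemidef := by
    have := Matrix.posSemidef_conjTranspose_mul_self P
    rwa [hPh, hPproj] at this
  have hQpsd : ((1 : Matrix (Fin n) (Fin n) ℝ) - P).PosSemidef := by
    have h1 : ((1 : Matrix (Fin n) (Fin n) ℝ) - P).conjTranspose = 1 - P := by
      rw [Matrix.conjTranspose_sub, Matrix.conjTranspose_one, hPh]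
    have h2 : ((1 : Matrix (Fin n) (Fin n) ℝ) - P) * (1 - P) = 1 - P := by
      rw [Matrix.mul_sub, Matrix.sub_mul, Matrix.sub_mul, hPproj]; noncomm_ring
    have := Matrix.posSemidef_conjTranspose_mul_self ((1 : Matrix (Fin n) (Fin n) ℝ) - P)
    rwa [h1, h2] at this
  set C := B * P * B with hCdef
  set E := B * (1 - P) * B with hEdef
  have hCpsd : C.PosSemidef := by
    have := hPpsd.mul_mul_conjTranspose_same B; rwa [hBh] at this
  have hEpsd : E.PosSemidef := by
    have := hQpsd.mul_mul_conjTranspose_same B; rwa [hBh] at this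
  have hCE : C + E = A := by rw [hCdef, hEdef, ← hBB]; noncomm_ring
  -- traces
  have htrC : (P * A * P).trace = C.trace := by
    rw [hCdef, ← hBB, show P * (B * B) * P = (P * (B * B)) * P from rfl,
      Matrix.trace_mul_comm (P * (B * B)) P, ← Matrix.mul_assoc, hPproj,
      Matrix.trace_mul_comm P (B * B), Matrix.trace_mul_cycle B P B]
  have htrE : (A - P * A * P).trace = E.trace := by
    have : E = A - C := by rw [← hCE]; abel
    rw [this, Matrix.trace_sub, Matrix.trace_sub, htrC]
  -- determinant of 1 + PAP
  have hdetPAP : (1 + P * A * P).det = (1 + C).det := by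
    have h1 : P * A * P = (P * B) * (B * P) := by rw [← hBB]; noncomm_ring
    have h2 : (B * P) * (P * B) = C := by
      rw [hCdef, show B * P * (P * B) = B * (P * P) * B by noncomm_ring, hPproj]
    rw [h1, Matrix.det_one_add_mul_comm, h2]
  have h1C : ((1 : Matrix (Fin n) (Fin n) ℝ) + C).PosDef :=
    Matrix.PosDef.add_posSemidef Matrix.PosDef.one hCpsd
  set T := CFC.sqrt (1 + C) with hTdef
  have hTT : T * T = 1 + C := CFC.sqrt_mul_sqrt_self (1 + C) h1C.posSemidef.nonneg
  have hTh : T.conjTranspose = T := (CFC.sqrt_nonneg (1 + C)).posSemidef.1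
  have hTu : IsUnit T.det := by
    have h2 : T.det * T.det = (1 + C).det := by rw [← Matrix.det_mul, hTT]
    have := h1C.det_pos
    refine isUnit_iff_ne_zero.mpr fun h => ?_
    rw [h, mul_zero] at h2; linarith
  have hTinv : T * T⁻¹ = 1 := Matrix.mul_nonsing_inv T hTu
  have hinvT : T⁻¹ * T = 1 := Matrix.nonsing_inv_mul T hTu
  have hTinvh : (T⁻¹).conjTranspose = T⁻¹ := by
    rw [Matrix.conjTranspose_nonsing_inv, hTh]
  set F := T⁻¹ * E * T⁻¹ with hFdef
  have hFpsd : F.PosSemidef := by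
    have := hEpsd.mul_mul_conjTranspose_same T⁻¹; rwa [hTinvh] at this
  have hkey : T * (1 + F) * T = 1 + A := by
    rw [Matrix.mul_add, mul_one, Matrix.add_mul, hTT, hFdef,
      show T * (T⁻¹ * E * T⁻¹) * T = (T * T⁻¹) * E * (T⁻¹ * T) by noncomm_ring,
      hTinv, hinvT, one_mul, mul_one, add_assoc, hCE]
  have hdetA : (1 + A).det = (1 + C).det * (1 + F).det := by
    rw [← hkey, Matrix.det_mul, Matrix.det_mul,
      show T.det * (1 + F).det * T.det = T.det * T.det * (1 + F).det by ring,
      ← Matrix.det_mul, hTT]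
  obtain ⟨hF1, hFexp⟩ := det_one_add_bounds hFpsd
  have hFdetpos : (0 : ℝ) < (1 + F).det := lt_of_lt_of_le one_pos hF1
  have hCdetpos : (0 : ℝ) < (1 + C).det := h1C.det_pos
  have hlog : Real.log (1 + A).det - Real.log (1 + P * A * P).det = Real.log (1 + F).det := by
    rw [hdetPAP, hdetA, Real.log_mul (ne_of_gt hCdetpos) (ne_of_gt hFdetpos)]; ring
  -- trace F ≤ trace E
  have hGpsd : ((1 : Matrix (Fin n) (Fin n) ℝ) - T⁻¹ * T⁻¹).PosSemidef := by
    have hCeq : C = T * T - 1 := by rw [hTT]; abel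
    have hG : (1 : Matrix (Fin n) (Fin n) ℝ) - T⁻¹ * T⁻¹ = T⁻¹ * C * T⁻¹ := by
      rw [hCeq, show T⁻¹ * (T * T - 1) * T⁻¹
          = (T⁻¹ * T) * (T * T⁻¹) - T⁻¹ * T⁻¹ by noncomm_ring, hinvT, hTinv, one_mul]
    rw [hG]
    have := hCpsd.mul_mul_conjTranspose_same T⁻¹; rwa [hTinvh] at this
  have htrF : F.trace = (T⁻¹ * T⁻¹ * E).trace := by
    rw [hFdef, Matrix.trace_mul_cycle]
  have htrFE : F.trace ≤ E.trace := by
    have h0 := psd_trace_mul_nonneg hGpsd hEpsd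
    rw [Matrix.sub_mul, one_mul, Matrix.trace_sub] at h0
    rw [htrF]; linarith
  constructor
  · rw [hlog]; exact Real.log_nonneg hF1
  · rw [hlog, htrE]
    calc Real.log (1 + F).det ≤ F.trace :=
          (Real.log_le_iff_le_exp hFdetpos).mpr hFexp
      _ ≤ E.trace := htrFE
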